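/- arXiv:2112.14404 — 6 statements merged into one kernel-verified Lean document; each statement's English description precedes it below -/
import Mathlib

section
/- Let $b \in \mathbb{R}^p \setminus \{0\}$ and $c \in \mathbb{R}^p$ with $\|c\| < 1$. Then the point $x^* = c - \frac{\langle b, c\rangle + \sqrt{\langle b, c\rangle^2 - \|b\|^2(\|c\|^2 - 1)}}{\|b\|^2} b$ satisfies $\|x^*\| = 1$ and is a global minimizer of $x \mapsto \frac{\langle b, x\rangle}{1 - \langle c, x\rangle}$ over the unit sphere $\{x \in \mathbb{R}^p : \|x\| = 1\}$. -/
open RealInnerProductSpace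

set_option maxHeartbeats 1000000

theorem stmt1 {p : ℕ} (b c : EuclideanSpace ℝ (Fin p)) (hb : b ≠ 0) (hc : ‖c‖ < 1) :
    let xstar := c - ((⟪b, c⟫ + Real.sqrt (⟪b, c⟫ ^ 2 - ‖b‖ ^ 2 * (‖c‖ ^ 2 - 1))) / ‖b‖ ^ 2) • b
    ‖xstar‖ = 1 ∧ ∀ x : EuclideanSpace ℝ (Fin p), ‖x‖ = 1 →
      ⟪b, xstar⟫ / (1 - ⟪c, xstar⟫) ≤ ⟪b, x⟫ / (1 - ⟪c, x⟫) := by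
  intro xstar
  have hB : (0:ℝ) < ‖b‖ ^ 2 := by
    have := norm_pos_iff.mpr hb
    positivity
  have hc2 : ‖c‖ ^ 2 < 1 := by nlinarith [norm_nonneg c]
  set β : ℝ := ⟪b, c⟫ with hβdef
  set D : ℝ := β ^ 2 - ‖b‖ ^ 2 * (‖c‖ ^ 2 - 1) with hDdef
  have hDpos : 0 < D := by nlinarith
  set s : ℝ := Real.sqrt D with hsdef
  have hs2 : s ^ 2 = D := Real.sq_sqrt hDpos.le
  have hs0 : 0 ≤ s := Real.sqrt_nonneg D
  have hspos : 0 < s := by nlinarith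
  have hβ2 : β ^ 2 < D := by nlinarith
  have hβs : 0 < β + s := by nlinarith
  have hβs' : β - s < 0 := by nlinarith
  set t : ℝ := (β + s) / ‖b‖ ^ 2 with htdef
  have htB : t * ‖b‖ ^ 2 = β + s := div_mul_cancel₀ _ (ne_of_gt hB)
  have hxstar : xstar = c - t • b := rfl
  clear_value t
  have hbx : ⟪b, xstar⟫ = -s := by
    rw [hxstar, inner_sub_right, real_inner_smul_right, real_inner_self_eq_norm_sq,
      ← hβdef]
    rw [mul_comm] at htB ⊢
    rw [htB]; ring
  have hcb : (⟪c, b⟫ : ℝ) = β := by rw [real_inner_comm]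
  have hcx : ⟪c, xstar⟫ = ‖c‖ ^ 2 - t * β := by
    rw [hxstar, inner_sub_right, real_inner_smul_right, real_inner_self_eq_norm_sq, hcb]
  have hnx : ‖xstar‖ = 1 := by
    have h1 : ‖xstar‖ ^ 2 = 1 := by
      rw [hxstar, @norm_sub_sq_real, real_inner_smul_right, hcb,
        norm_smul, mul_pow]
      simp only [Real.norm_eq_abs, sq_abs]
      have hG : (‖c‖ ^ 2 - 2 * (t * β) + t ^ 2 * ‖b‖ ^ 2 - 1) * ‖b‖ ^ 2 = 0 := by
        linear_combination hs2 + (t * ‖b‖ ^ 2 - β + s) * htB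
      rcases mul_eq_zero.mp hG with h | h
      · linarith
      · linarith
    nlinarith [norm_nonneg xstar]
  refine ⟨hnx, ?_⟩
  set m : ℝ := (β - s) / (1 - ‖c‖ ^ 2) with hmdef
  have h1c : (0:ℝ) < 1 - ‖c‖ ^ 2 := by linarith
  have hmC : m * (1 - ‖c‖ ^ 2) = β - s := div_mul_cancel₀ _ (ne_of_gt h1c)
  clear_value m
  have hmneg : m < 0 := by nlinarith [hmC]
  have hkey : ‖b‖ ^ 2 + 2 * m * β + m ^ 2 * (‖c‖ ^ 2 - 1) = 0 := by
    have h2 : (‖b‖ ^ 2 + 2 * m * β + m ^ 2 * (‖c‖ ^ 2 - 1)) * (1 - ‖c‖ ^ 2) = 0 := by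
      linear_combination (s + β - m * (1 - ‖c‖ ^ 2)) * hmC - hs2
    rcases mul_eq_zero.mp h2 with h3 | h3
    · exact h3
    · linarith
  have hnbm : ‖b + m • c‖ = -m := by
    have hsq : ‖b + m • c‖ ^ 2 = m ^ 2 := by
      rw [@norm_add_sq_real, real_inner_smul_right, ← hβdef, norm_smul, mul_pow]
      simp only [Real.norm_eq_abs, sq_abs]
      linarith [hkey]
    nlinarith [norm_nonneg (b + m • c)]
  have hmain : ∀ x : EuclideanSpace ℝ (Fin p), ‖x‖ = 1 → m ≤ ⟪b, x⟫ / (1 - ⟪c, x⟫) := by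
    intro x hx
    have hcxlt : ⟪c, x⟫ < 1 := by
      have := real_inner_le_norm c x
      rw [hx, mul_one] at this
      linarith
    have hden : (0:ℝ) < 1 - ⟪c, x⟫ := by linarith
    have hCS : -‖b + m • c‖ ≤ ⟪b + m • c, x⟫ := by
      have h1 := abs_real_inner_le_norm (b + m • c) x
      rw [hx, mul_one] at h1
      have := neg_abs_le (⟪b + m • c, x⟫ : ℝ)
      linarith
    rw [inner_add_left, real_inner_smul_left, hnbm] at hCS
    rw [le_div_iff₀ hden]
    nlinarith [hCS]
  have hdenx : (0:ℝ) < 1 - ⟪c, xstar⟫ := by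
    have := real_inner_le_norm c xstar
    rw [hnx, mul_one] at this
    linarith
  have hval : ⟪b, xstar⟫ / (1 - ⟪c, xstar⟫) = m := by
    rw [hbx, hcx, hmdef]
    rw [hcx] at hdenx
    rw [div_eq_div_iff (ne_of_gt hdenx) (ne_of_gt h1c)]
    have hG : (-s * (1 - ‖c‖ ^ 2) - (β - s) * (1 - (‖c‖ ^ 2 - t * β))) * ‖b‖ ^ 2 = 0 := by
      linear_combination β * hs2 - β * (β - s) * htB
    rcases mul_eq_zero.mp hG with h | h
    · linarith
    · linarith
  intro x hx
  rw [hval]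
  exact hmain x hx
end

section
/- Suppose $P_1, P_2: X \to \mathbb{R}$ are convex with $\mathcal{F} = \{x : P_1(x) - P_2(x) \le \sigma\}$, and suppose the 'uniform Slater condition' holds: for every $y \in \mathcal{F}$ and every $\xi \in \partial P_2(y)$ there exists $x^\odot$ with $P_1(x^\odot) - P_2(y) - \langle\xi, x^\odot - y\rangle < \sigma$. Then for every $\bar{x} \in \mathcal{F}$ with $P_1(\bar{x}) - P_2(\bar{x}) = \sigma$, one has $0 \notin \partial P_1(\bar{x}) - \partial P_2(\bar{x})$, i.e., $\partial P_1(\bar{x}) \cap \partial P_2(\bar{x}) = \emptyset$. -/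
open RealInnerProductSpace

theorem stmt5 {X : Type*} [NormedAddCommGroup X] [InnerProductSpace ℝ X]
    [FiniteDimensional ℝ X]
    (P₁ P₂ : X → ℝ) (hP₁ : ConvexOn ℝ Set.univ P₁) (hP₂ : ConvexOn ℝ Set.univ P₂)
    (σ : ℝ) (hσ : 0 < σ)
    (slater : ∀ y : X, P₁ y - P₂ y ≤ σ → ∀ ξ : X, (∀ x, P₂ y + ⟪ξ, x - y⟫ ≤ P₂ x) →
      ∃ xo : X, P₁ xo - P₂ y - ⟪ξ, xo - y⟫ < σ)
    (xb : X) (hxb : P₁ xb - P₂ xb ≤ σ) (heq : P₁ xb - P₂ xb = σ) :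
    ¬ ∃ ξ : X, (∀ x, P₁ xb + ⟪ξ, x - xb⟫ ≤ P₁ x) ∧ (∀ x, P₂ xb + ⟪ξ, x - xb⟫ ≤ P₂ x) := by
  rintro ⟨ξ, h₁, h₂⟩
  obtain ⟨xo, hxo⟩ := slater xb hxb ξ h₂
  have := h₁ xo
  linarith
end

section
/- Let $\mathcal{K} \subseteq \mathbb{R}^m$ be a closed convex cone and $g : X \to \mathbb{R}^m$ be $\mathcal{K}$-convex, i.e., $\lambda g(x) + (1-\lambda) g(y) \in g(\lambda x + (1-\lambda) y) + \mathcal{K}$ for all $x, y \in X$ and $\lambda \in [0,1]$. Let $\Omega = \{x \in X : 0 \in g(x) + \mathcal{K}\}$ and suppose there exist $x^s \in \Omega$ and $\delta > 0$ such that the closed ball $B(0,\delta) \subseteq g(x^s) + \mathcal{K}$. Then for all $x \in X$, $\mathrm{dist}(x, \Omega) \le \frac{\|x - x^s\|}{\delta} \, \mathrm{dist}(0, g(x) + \mathcal{K})$. -/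
open Pointwise

theorem stmt11 {X : Type*} [NormedAddCommGroup X] [InnerProductSpace ℝ X]
    [FiniteDimensional ℝ X] {m : ℕ}
    (K : Set (EuclideanSpace ℝ (Fin m))) (hKcl : IsClosed K)
    (hKconv : Convex ℝ K) (hKcone : ∀ t : ℝ, 0 < t → ∀ v ∈ K, t • v ∈ K)
    (g : X → EuclideanSpace ℝ (Fin m))
    (hg : ∀ x y : X, ∀ l : ℝ, l ∈ Set.Icc (0:ℝ) 1 →
      l • g x + (1 - l) • g y - g (l • x + (1 - l) • y) ∈ K)
    (Ω : Set X) (hΩ : Ω = {x : X | -g x ∈ K})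
    (xs : X) (hxs : xs ∈ Ω) (δ : ℝ) (hδ : 0 < δ)
    (hball : Metric.closedBall (0 : EuclideanSpace ℝ (Fin m)) δ ⊆ {g xs} + K)
    (x : X) :
    Metric.infDist x Ω ≤ ‖x - xs‖ / δ * Metric.infDist 0 ({g x} + K) := by
  subst hΩ
  have hxsK : -g xs ∈ K := hxs
  have hSne : ({g x} + K : Set _).Nonempty :=
    ⟨g x + (-g xs), Set.add_mem_add rfl hxsK⟩
  have hScl : IsClosed ({g x} + K : Set _) := by
    rw [Set.singleton_add]
    exact (Homeomorph.addLeft (g x)).isClosedMap _ hKcl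
  obtain ⟨u, huS, hud⟩ := hScl.exists_infDist_eq_dist hSne 0
  obtain ⟨a, ha, k1, hk1, hak⟩ := huS
  rw [Set.mem_singleton_iff] at ha; subst ha
  have kadd : ∀ a ∈ K, ∀ b ∈ K, a + b ∈ K := by
    intro a ha b hb
    have h := hKconv ha hb (by norm_num : (0:ℝ) ≤ 1/2) (by norm_num : (0:ℝ) ≤ 1/2)
      (by norm_num)
    have h2 := hKcone 2 (by norm_num) _ h
    convert h2 using 1
    module
  have hinf : Metric.infDist 0 ({g x} + K : Set _) = ‖u‖ := by
    rw [hud, dist_zero_left]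
  rcases eq_or_lt_of_le (norm_nonneg u) with h0 | h0
  · -- u = 0
    have hu0 : u = 0 := by simpa using h0.symm
    have hxΩ : x ∈ {x : X | -g x ∈ K} := by
      have hk : -(g x) = k1 := by
        rw [hu0] at hak
        exact neg_eq_of_add_eq_zero_right hak
      rw [Set.mem_setOf_eq, hk]; exact hk1
    rw [Metric.infDist_zero_of_mem hxΩ]
    exact mul_nonneg (by positivity) Metric.infDist_nonneg
  · set l : ℝ := ‖u‖ / (‖u‖ + δ) with hl
    have hu0 : (0:ℝ) < ‖u‖ := h0
    have hden : (0:ℝ) < ‖u‖ + δ := by linarith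
    have hl0 : 0 < l := div_pos hu0 hden
    have hl1 : l < 1 := (div_lt_one hden).2 (by linarith)
    have hlmem : l ∈ Set.Icc (0:ℝ) 1 := ⟨hl0.le, hl1.le⟩
    set v : EuclideanSpace ℝ (Fin m) := (-(δ/‖u‖)) • u with hv
    have hvnorm : ‖v‖ = δ := by
      rw [hv, norm_smul, Real.norm_eq_abs, abs_neg, abs_div, abs_of_pos hδ,
        abs_of_pos hu0]
      field_simp
    have hvball : v ∈ Metric.closedBall (0 : EuclideanSpace ℝ (Fin m)) δ := by
      rw [Metric.mem_closedBall, dist_zero_right, hvnorm]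
    obtain ⟨b, hb, k2, hk2, hbk⟩ := hball hvball
    rw [Set.mem_singleton_iff] at hb; subst hb
    set z : X := l • xs + (1 - l) • x with hz
    have h3 : l • g xs + (1 - l) • g x - g z ∈ K := hg xs x l hlmem
    have h1 : (1 - l) • k1 ∈ K := hKcone (1 - l) (by linarith) k1 hk1
    have h2 : l • k2 ∈ K := hKcone l hl0 k2 hk2
    have hsum := kadd _ h3 _ (kadd _ h1 _ h2)
    have hk1e : k1 = u - g x := eq_sub_of_add_eq' hak
    have hk2e : k2 = v - g xs := eq_sub_of_add_eq' hbk
    have hscal : l * (δ/‖u‖) = 1 - l := by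
      rw [hl]; field_simp; ring
    have hzK : -g z ∈ K := by
      convert hsum using 1
      rw [hk1e, hk2e, hv, smul_sub, smul_sub, smul_smul]
      rw [show l * -(δ/‖u‖) = -(1 - l) by rw [mul_neg, hscal]]
      module
    have hzΩ : z ∈ {x : X | -g x ∈ K} := hzK
    have hdist : dist x z = l * ‖x - xs‖ := by
      rw [dist_eq_norm]
      have : x - z = l • (x - xs) := by rw [hz]; module
      rw [this, norm_smul, Real.norm_eq_abs, abs_of_pos hl0]
    calc Metric.infDist x {x : X | -g x ∈ K} ≤ dist x z :=
          Metric.infDist_le_dist_of_mem hzΩ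
      _ = l * ‖x - xs‖ := hdist
      _ ≤ ‖x - xs‖ / δ * ‖u‖ := by
          rw [hl, div_mul_eq_mul_div, div_mul_eq_mul_div, div_le_div_iff₀ hden hδ]
          nlinarith [mul_nonneg (mul_nonneg (norm_nonneg (x - xs)) hu0.le) hu0.le]
      _ = ‖x - xs‖ / δ * Metric.infDist 0 ({g x} + K : Set _) := by rw [hinf]
end

section
/- Let $\mathcal{K} = \mathbb{R}_+$ and $g : X \to \mathbb{R}$ be a convex function. Suppose there exist $x^s$ with $g(x^s) \le -\delta < 0$. Let $\Omega = \{x : g(x) \le 0\}$. Then for all $x \in X$, $\mathrm{dist}(x, \Omega) \le \frac{\|x - x^s\|}{\delta}\,[g(x)]_+$, where $[t]_+ = \max\{t, 0\}$. -/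
theorem stmt12 {X : Type*} [NormedAddCommGroup X] [InnerProductSpace ℝ X]
    [FiniteDimensional ℝ X]
    (g : X → ℝ) (hg : ConvexOn ℝ Set.univ g)
    (xs : X) (δ : ℝ) (hδ : 0 < δ) (hxs : g xs ≤ -δ) (x : X) :
    Metric.infDist x {z : X | g z ≤ 0} ≤ ‖x - xs‖ / δ * max (g x) 0 := by
  rcases le_or_gt (g x) 0 with h | h
  · have hx : x ∈ {z : X | g z ≤ 0} := h
    have : Metric.infDist x {z : X | g z ≤ 0} = 0 := Metric.infDist_zero_of_mem hx
    rw [this]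
    positivity
  · have hmax : max (g x) 0 = g x := max_eq_left h.le
    set t : ℝ := g x / (g x + δ) with ht
    have hgd : 0 < g x + δ := by linarith
    have ht0 : 0 ≤ t := div_nonneg h.le hgd.le
    have ht1 : t ≤ 1 := by
      rw [div_le_one hgd]; linarith
    have h1t : 1 - t = δ / (g x + δ) := by
      rw [ht]; field_simp; ring
    set y : X := t • xs + (1 - t) • x with hy
    have hgy : g y ≤ 0 := by
      have hconv := hg.2 (Set.mem_univ xs) (Set.mem_univ x) ht0
        (show (0:ℝ) ≤ 1 - t by linarith) (show t + (1 - t) = 1 by ring)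
      simp only [smul_eq_mul] at hconv
      have hcalc : t * g xs + (1 - t) * g x ≤ 0 := by
        have h2 : t * g xs ≤ t * (-δ) := mul_le_mul_of_nonneg_left hxs ht0
        have h3 : t * (g x + δ) = g x := by
          rw [ht]; field_simp
        nlinarith
      exact hconv.trans hcalc
    have hmem : y ∈ {z : X | g z ≤ 0} := hgy
    have hdist : dist x y = t * ‖x - xs‖ := by
      have : x - y = t • (x - xs) := by
        rw [hy]; module
      rw [dist_eq_norm, this, norm_smul, Real.norm_eq_abs, abs_of_nonneg ht0]
    calc Metric.infDist x {z : X | g z ≤ 0} ≤ dist x y := Metric.infDist_le_dist_of_mem hmem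
      _ = t * ‖x - xs‖ := hdist
      _ ≤ ‖x - xs‖ / δ * max (g x) 0 := by
          rw [hmax, ht, div_mul_eq_mul_div, div_mul_eq_mul_div,
            div_le_div_iff₀ hgd hδ]
          nlinarith [mul_nonneg (norm_nonneg (x - xs)) h.le]
end

section
/- Let $a \in \mathbb{R}^n$, $\sigma > 0$, and let $\xi \in \mathbb{R}^n$ satisfy $|\xi_i| \le \mu < 1$ for all $i$. Consider the problem $\min \{\langle a, x\rangle : \|x\|_1 - \langle\xi, x\rangle \le \sigma\}$, with $a \ne 0$. Let $i_0 \in \arg\min_i \left\{\frac{-|a_i|}{1 + \xi_i\,\mathrm{sgn}(a_i)}\right\}$ where $\mathrm{sgn}(t) = t/|t|$ for $t \ne 0$ and $\mathrm{sgn}(0) = 1$. Then the vector $x^*$ with $x^*_{i_0} = \frac{-\sigma\,\mathrm{sgn}(a_{i_0})}{1 + \xi_{i_0}\mathrm{sgn}(a_{i_0})}$ and $x^*_i = 0$ for $i \ne i_0$ is an optimal solution. -/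
noncomputable def sgn (t : ℝ) : ℝ := if t = 0 then 1 else t / |t|

lemma sgn_cases (t : ℝ) : sgn t = 1 ∨ sgn t = -1 := by
  unfold sgn
  rcases lt_trichotomy t 0 with h | h | h
  · right; rw [if_neg h.ne, abs_of_neg h, div_neg, div_self h.ne]
  · left; rw [if_pos h]
  · left; rw [if_neg h.ne', abs_of_pos h, div_self h.ne']

lemma mul_sgn (t : ℝ) : t * sgn t = |t| := by
  unfold sgn
  by_cases h : t = 0
  · simp [h]
  · rw [if_neg h]
    rw [mul_div_assoc', div_eq_iff (abs_ne_zero.mpr h)]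
    exact (abs_mul_abs_self t).symm

lemma abs_sgn (t : ℝ) : |sgn t| = 1 := by
  rcases sgn_cases t with h | h <;> simp [h]

theorem stmt13 {n : ℕ} (a ξ : EuclideanSpace ℝ (Fin n)) (σ μ : ℝ) (hσ : 0 < σ)
    (hμ : μ < 1) (hξ : ∀ i, |ξ i| ≤ μ) (ha : a ≠ 0)
    (i₀ : Fin n)
    (hi₀ : ∀ i, (-|a i₀|) / (1 + ξ i₀ * sgn (a i₀)) ≤ (-|a i|) / (1 + ξ i * sgn (a i))) :
    let xstar : EuclideanSpace ℝ (Fin n) :=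
      WithLp.toLp 2 (fun i => if i = i₀ then (-σ * sgn (a i₀)) / (1 + ξ i₀ * sgn (a i₀)) else 0)
    (∑ i, |xstar i| - ∑ i, ξ i * xstar i ≤ σ) ∧
      ∀ x : EuclideanSpace ℝ (Fin n), (∑ i, |x i| - ∑ i, ξ i * x i ≤ σ) →
        ∑ i, a i * xstar i ≤ ∑ i, a i * x i := by
  intro xstar
  -- positivity of denominators
  have hc : ∀ i, 0 < 1 + ξ i * sgn (a i) := by
    intro i
    have h1 : |ξ i * sgn (a i)| < 1 := by
      rw [abs_mul, abs_sgn, mul_one]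
      exact lt_of_le_of_lt (hξ i) hμ
    have := (abs_lt.mp h1).1
    linarith
  set m : ℝ := (-|a i₀|) / (1 + ξ i₀ * sgn (a i₀)) with hmdef
  have hm : m ≤ 0 := div_nonpos_of_nonpos_of_nonneg (by simp [abs_nonneg]) (hc i₀).le
  have hmc : ∀ i, m * (1 + ξ i * sgn (a i)) ≤ -|a i| := by
    intro i
    have h := mul_le_mul_of_nonneg_right (hi₀ i) (hc i).le
    rwa [div_mul_cancel₀ _ (hc i).ne'] at h
  -- simplify xstar sums
  have hxs : ∀ (f : ℝ → ℝ), f 0 = 0 →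
      ∑ i, f (xstar i) = f ((-σ * sgn (a i₀)) / (1 + ξ i₀ * sgn (a i₀))) := by
    intro f hf
    rw [Finset.sum_eq_single i₀]
    · simp [xstar]
    · intro b _ hb; simp [xstar, hb, hf]
    · simp
  have habsx : ∑ i, |xstar i| = σ / (1 + ξ i₀ * sgn (a i₀)) := by
    rw [hxs (fun t => |t|) abs_zero]
    show |(-σ * sgn (a i₀)) / (1 + ξ i₀ * sgn (a i₀))| = _
    rw [abs_div, abs_of_pos (hc i₀), abs_mul, abs_sgn, mul_one, abs_neg, abs_of_pos hσ]
  have hsum2 : ∑ i, ξ i * xstar i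
      = ξ i₀ * ((-σ * sgn (a i₀)) / (1 + ξ i₀ * sgn (a i₀))) := by
    have h := hxs (fun t => ξ i₀ * t) (by ring)
    rw [Finset.sum_congr rfl (fun i _ => ?_), h]
    by_cases hi : i = i₀
    · subst hi; rfl
    · simp [xstar, hi]
  have hobj : ∑ i, a i * xstar i = σ * m := by
    have h := hxs (fun t => a i₀ * t) (by ring)
    rw [Finset.sum_congr rfl (fun i _ => ?_), h]
    · show a i₀ * ((-σ * sgn (a i₀)) / (1 + ξ i₀ * sgn (a i₀))) = σ * m
      rw [hmdef]
      have h2 : a i₀ * (-σ * sgn (a i₀)) = -σ * |a i₀| := by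
        have := mul_sgn (a i₀); nlinarith [this]
      rw [mul_div_assoc', h2]; ring
    · by_cases hi : i = i₀
      · subst hi; rfl
      · simp [xstar, hi]
  constructor
  · rw [habsx, hsum2]
    have hc0 := hc i₀
    have h : σ / (1 + ξ i₀ * sgn (a i₀))
        - ξ i₀ * (-σ * sgn (a i₀) / (1 + ξ i₀ * sgn (a i₀))) = σ := by
      field_simp
      ring
    linarith [h.le]
  · intro x hx
    rw [hobj]
    have key : ∀ i, m * (|x i| - ξ i * x i) ≤ a i * x i := by
      intro i
      have hmc' := hmc i
      have hξi1 : |ξ i| < 1 := lt_of_le_of_lt (hξ i) hμ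
      have hξlo := (abs_lt.mp hξi1).1
      have hξhi := (abs_lt.mp hξi1).2
      have hsg := mul_sgn (a i)
      have habs : |a i + m * ξ i| ≤ -m := by
        rw [abs_le]
        rcases sgn_cases (a i) with hs | hs
        · rw [hs] at hmc' hsg
          simp only [mul_one] at hsg hmc'
          constructor <;> nlinarith [abs_nonneg (a i)]
        · rw [hs] at hmc' hsg
          constructor <;> nlinarith [abs_nonneg (a i)]
      have h1 : -(-m * |x i|) ≤ (a i + m * ξ i) * x i := by
        have h2 : |(a i + m * ξ i) * x i| ≤ -m * |x i| := by
          rw [abs_mul]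
          exact mul_le_mul_of_nonneg_right habs (abs_nonneg _)
        linarith [neg_abs_le ((a i + m * ξ i) * x i)]
      nlinarith
    calc σ * m = m * σ := by ring
      _ ≤ m * (∑ i, |x i| - ∑ i, ξ i * x i) :=
          mul_le_mul_of_nonpos_left hx hm
      _ = ∑ i, m * (|x i| - ξ i * x i) := by
          rw [mul_sub, Finset.mul_sum, Finset.mul_sum, ← Finset.sum_sub_distrib]
          exact Finset.sum_congr rfl (fun i _ => by ring)
      _ ≤ ∑ i, a i * x i := Finset.sum_le_sum (fun i _ => key i)
end

section
/- Let $P_1 : X \to \mathbb{R}$ be strongly convex with modulus $\rho > 0$ and $P_2 : X \to \mathbb{R}$ convex, $\sigma > 0$. Let $x \in \mathcal{F} = \{z : P_1(z) - P_2(z) \le \sigma\}$, $\xi \in \partial P_2(x)$, and suppose $u$, $\lambda \ge \underline{\lambda} > 0$, $w \in \partial P_1(u)$ satisfy the KKT conditions $\nabla f(x) + \lambda(w - \xi) = 0$ and $\lambda\,(P_1(u) - \langle\xi, u - x\rangle - P_2(x) - \sigma) = 0$, for a differentiable $f$. Then $\langle\nabla f(x), u - x\rangle \le -\frac{\rho\,\underline{\lambda}}{2}\|x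 - u\|^2$. -/
open RealInnerProductSpace

theorem stmt18 {X : Type*} [NormedAddCommGroup X] [InnerProductSpace ℝ X]
    [FiniteDimensional ℝ X]
    (P₁ P₂ f : X → ℝ) (ρ σ lam lamb : ℝ)
    (hρ : 0 < ρ) (hσ : 0 < σ) (hlamb : 0 < lamb) (hlam : lamb ≤ lam)
    (x u w ξ gf : X)
    (hgf : HasGradientAt f gf x)
    (hx : P₁ x - P₂ x ≤ σ)
    (hξ : ∀ z : X, P₂ x + ⟪ξ, z - x⟫ ≤ P₂ z)
    (hw : ∀ z : X, P₁ u + ⟪w, z - u⟫ + ρ / 2 * ‖z - u‖ ^ 2 ≤ P₁ z)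
    (hKKT1 : gf + lam • (w - ξ) = 0)
    (hKKT2 : lam * (P₁ u - ⟪ξ, u - x⟫ - P₂ x - σ) = 0) :
    ⟪gf, u - x⟫ ≤ -(ρ * lamb / 2) * ‖x - u‖ ^ 2 := by
  have hlampos : 0 < lam := lt_of_lt_of_le hlamb hlam
  have hgfe : gf = -(lam • (w - ξ)) := eq_neg_of_add_eq_zero_left hKKT1
  have hslack : P₁ u - ⟪ξ, u - x⟫ - P₂ x - σ = 0 := by
    rcases mul_eq_zero.mp hKKT2 with h | h
    · exact absurd h (ne_of_gt hlampos)
    · exact h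
  have hwx := hw x
  have key : ⟪w - ξ, x - u⟫ ≤ -(ρ / 2) * ‖x - u‖ ^ 2 := by
    have : ⟪w - ξ, x - u⟫ = ⟪w, x - u⟫ + ⟪ξ, u - x⟫ := by
      rw [inner_sub_left]
      have : ⟪ξ, u - x⟫ = -⟪ξ, x - u⟫ := by rw [← inner_neg_right, neg_sub]
      rw [this]; ring
    rw [this]
    have h1 : ⟪w, x - u⟫ ≤ P₁ x - P₁ u - ρ / 2 * ‖x - u‖ ^ 2 := by linarith
    have h2 : ⟪ξ, u - x⟫ = P₁ u - P₂ x - σ := by linarith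
    nlinarith
  have hinner : ⟪gf, u - x⟫ = lam * ⟪w - ξ, x - u⟫ := by
    rw [hgfe, inner_neg_left, real_inner_smul_left]
    have : ⟪w - ξ, u - x⟫ = -⟪w - ξ, x - u⟫ := by rw [← inner_neg_right, neg_sub]
    rw [this]; ring
  rw [hinner]
  nlinarith [mul_le_mul_of_nonneg_left key (le_of_lt hlampos),
    mul_nonneg (mul_nonneg (sub_nonneg.mpr hlam) hρ.le) (sq_nonneg ‖x - u‖)]
end
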